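/- Let d ≥ 3 and k ≥ 2 be integers and let d_0, d_1, …, d_k be natural numbers with Σ_{j=0}^k d_j = d and d_k ≤ d − 1. Let x_min > 0 be a real, let x be a real with k·x_min ≤ x < (k+1)·x_min, and let π₀ be a real with π₀ ≥ d·G(k) + 2k − 1, where G(m) = (d^m − 1)/(d − 1). Define Q = x + Σ_{j=1}^k d_j·G(j)·(x − (j−1)·x_min) and W = π₀ + 1 + Σ_{j=1}^k d_j·G(j). Then (2x − (2k − 1)·x_min)·W > 2·Q. -/

import Mathlib

noncomputable def G (d m : ℕ) : ℝ := ((d : ℝ) ^ m - 1) / ((d : ℝ) - 1)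

lemma hdR {d : ℕ} (hd : 3 ≤ d) : (3:ℝ) ≤ (d:ℝ) := by exact_mod_cast hd

lemma G_one_le {d m : ℕ} (hd : 3 ≤ d) (hm : 1 ≤ m) : (1:ℝ) ≤ G d m := by
  have h3 := hdR hd
  have hpos : (0:ℝ) < (d:ℝ) - 1 := by linarith
  rw [G, le_div_iff₀ hpos]
  have : (d:ℝ) ≤ (d:ℝ) ^ m := le_self_pow₀ (by linarith) (by omega)
  linarith

lemma G_add {d : ℕ} (hd : 3 ≤ d) (j m : ℕ) :
    G d (j + m) = (d:ℝ) ^ m * G d j + G d m := by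
  have h3 := hdR hd
  have hne : (d:ℝ) - 1 ≠ 0 := by linarith
  unfold G
  field_simp
  rw [pow_add]
  ring

lemma pow_ge {d : ℕ} (hd : 3 ≤ d) (m : ℕ) : 2 * (m:ℝ) + 1 ≤ (d:ℝ) ^ m := by
  have h1 : (1:ℝ) + (m:ℝ) * 2 ≤ (1 + 2) ^ m := one_add_mul_le_pow (by norm_num) m
  have h2 : ((1:ℝ) + 2) ^ m ≤ (d:ℝ) ^ m :=
    pow_le_pow_left₀ (by norm_num) (by have := hdR hd; linarith) m
  linarith

lemma key {d j m : ℕ} (hd : 3 ≤ d) (hj : 1 ≤ j) (hm : 1 ≤ m) :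
    (2 * (m:ℝ) + 1) * G d j ≤ G d (j + m) - 1 := by
  have hGj := G_one_le hd hj
  have hGm := G_one_le hd hm
  have hpow := pow_ge hd m
  have hnn : (0:ℝ) ≤ ((d:ℝ)^m - (2*(m:ℝ)+1)) * G d j :=
    mul_nonneg (by linarith) (by linarith)
  rw [G_add hd j m]
  nlinarith

theorem stmt_10 (d k : ℕ) (hd : 3 ≤ d) (hk : 2 ≤ k)
    (dv : ℕ → ℕ) (hsum : ∑ j ∈ Finset.range (k + 1), dv j = d) (hdk : dv k ≤ d - 1)
    (xmin x π₀ : ℝ) (hxmin : 0 < xmin)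
    (hx1 : (k : ℝ) * xmin ≤ x) (hx2 : x < ((k : ℝ) + 1) * xmin)
    (hπ : (d : ℝ) * G d k + 2 * (k : ℝ) - 1 ≤ π₀) :
    (2 * x - (2 * (k : ℝ) - 1) * xmin) *
        (π₀ + 1 + ∑ j ∈ Finset.Icc 1 k, (dv j : ℝ) * G d j)
      > 2 * (x + ∑ j ∈ Finset.Icc 1 k, (dv j : ℝ) * G d j * (x - ((j : ℝ) - 1) * xmin)) := by
  have h3 := hdR hd
  have hGk := G_one_le hd (by omega : 1 ≤ k)
  set S := ∑ j ∈ Finset.Icc 1 k, (dv j : ℝ) * G d j with hS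
  set T := ∑ j ∈ Finset.Icc 1 k, (dv j : ℝ) * G d j * (x - ((j : ℝ) - 1) * xmin) with hT
  set a := 2 * x - (2 * (k : ℝ) - 1) * xmin with ha
  set P := ∑ j ∈ Finset.Icc 1 k, (dv j : ℝ) * G d j * (2 * (k:ℝ) + 1 - 2 * (j:ℝ)) with hP
  -- combination identity
  have hcomb : a * S - 2 * T = -(P * xmin) := by
    rw [hS, hT, hP, Finset.mul_sum, Finset.mul_sum, Finset.sum_mul, ← Finset.sum_sub_distrib,
      ← Finset.sum_neg_distrib]
    exact Finset.sum_congr rfl (fun j _ => by rw [ha]; ring)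
  -- sum bound: P ≤ d * G d k - 1
  have hsplitN : ∀ f : ℕ → ℕ, ∑ j ∈ Finset.Icc 1 k, f j = (∑ j ∈ Finset.Icc 1 (k-1), f j) + f k := by
    intro f
    have hk' : k - 1 + 1 = k := by omega
    rw [← hk']
    exact Finset.sum_Icc_succ_top (by omega) f
  have hsplitR : ∀ f : ℕ → ℝ, ∑ j ∈ Finset.Icc 1 k, f j = (∑ j ∈ Finset.Icc 1 (k-1), f j) + f k := by
    intro f
    have hk' : k - 1 + 1 = k := by omega
    rw [← hk']
    exact Finset.sum_Icc_succ_top (by omega) f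
  have hAB : (∑ j ∈ Finset.Icc 1 (k-1), dv j) + dv k ≤ d := by
    have h1 : ∑ j ∈ Finset.range (k+1), dv j = dv 0 + ∑ j ∈ Finset.Icc 1 k, dv j := by
      rw [Finset.range_eq_Ico, Finset.sum_eq_sum_Ico_succ_bot (by omega)]
      congr 1
    rw [hsplitN dv] at h1
    omega
  have hABR : ((∑ j ∈ Finset.Icc 1 (k-1), dv j : ℕ) : ℝ) + (dv k : ℝ) ≤ (d:ℝ) := by
    exact_mod_cast hAB
  have hdkR : (dv k : ℝ) ≤ (d:ℝ) - 1 := by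
    have : (dv k : ℝ) ≤ ((d - 1 : ℕ) : ℝ) := by exact_mod_cast hdk
    rw [Nat.cast_sub (by omega)] at this
    simpa using this
  have hP1 : ∑ j ∈ Finset.Icc 1 (k-1), (dv j : ℝ) * G d j * (2 * (k:ℝ) + 1 - 2 * (j:ℝ))
      ≤ ∑ j ∈ Finset.Icc 1 (k-1), (dv j : ℝ) * (G d k - 1) := by
    apply Finset.sum_le_sum
    intro j hj
    rw [Finset.mem_Icc] at hj
    obtain ⟨hj1, hj2⟩ := hj
    have hjk : j < k := by omega
    obtain ⟨m, hm1, hm2⟩ : ∃ m, 1 ≤ m ∧ k = j + m := ⟨k - j, by omega, by omega⟩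
    have hco : 2 * (k:ℝ) + 1 - 2 * (j:ℝ) = 2 * ((k - j : ℕ):ℝ) + 1 := by
      rw [Nat.cast_sub (by omega)]; ring
    have hkey : (2 * ((k-j:ℕ):ℝ) + 1) * G d j ≤ G d k - 1 := by
      have := key (d := d) (j := j) (m := k - j) hd hj1 (by omega)
      rwa [show j + (k - j) = k by omega] at this
    rw [mul_assoc, hco]
    exact mul_le_mul_of_nonneg_left (by rw [mul_comm]; exact hkey) (by positivity)
  have hPk : (dv k : ℝ) * G d k * (2 * (k:ℝ) + 1 - 2 * (k:ℝ)) = (dv k : ℝ) * G d k := by ring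
  have hsum2 : ∑ j ∈ Finset.Icc 1 (k-1), (dv j : ℝ) * (G d k - 1)
      = ((∑ j ∈ Finset.Icc 1 (k-1), dv j : ℕ) : ℝ) * (G d k - 1) := by
    rw [Nat.cast_sum, Finset.sum_mul]
  have hPbound : P ≤ (d:ℝ) * G d k - 1 := by
    rw [hP, hsplitR, hPk]
    set A := ((∑ j ∈ Finset.Icc 1 (k-1), dv j : ℕ) : ℝ)
    have hA0 : (0:ℝ) ≤ A := by positivity
    have h1 : ∑ j ∈ Finset.Icc 1 (k-1), (dv j : ℝ) * G d j * (2 * (k:ℝ) + 1 - 2 * (j:ℝ))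
        ≤ A * (G d k - 1) := le_of_le_of_eq hP1 hsum2
    nlinarith [mul_nonneg (by linarith : (0:ℝ) ≤ (d:ℝ) - A - (dv k : ℝ)) (by linarith : (0:ℝ) ≤ G d k - 1)]
  -- RHS bound
  have hπ0 : (0:ℝ) < π₀ := by
    have : (0:ℝ) ≤ (d:ℝ) * G d k := by positivity
    have hk1 : (1:ℝ) ≤ (k:ℝ) := by exact_mod_cast (by omega : 1 ≤ k)
    nlinarith
  have haxmin : xmin ≤ a := by
    rw [ha]; nlinarith
  have hrhs : ((d:ℝ) * G d k - 1) * xmin < a * (π₀ + 1) - 2 * x := by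
    have h1 : xmin * π₀ ≤ a * π₀ := mul_le_mul_of_nonneg_right haxmin hπ0.le
    have h2 : xmin * ((d:ℝ) * G d k + 2 * (k:ℝ) - 1) ≤ xmin * π₀ :=
      mul_le_mul_of_nonneg_left hπ hxmin.le
    nlinarith
  have hfin : a * (π₀ + 1 + S) - 2 * (x + T) = (a * (π₀ + 1) - 2 * x) + (a * S - 2 * T) := by ring
  have hPx : P * xmin ≤ ((d:ℝ) * G d k - 1) * xmin :=
    mul_le_mul_of_nonneg_right hPbound hxmin.le
  have : a * (π₀ + 1 + S) - 2 * (x + T) > 0 := by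
    rw [hfin, hcomb]; linarith
  linarith
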